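/- Let Ω ⊂ ℝ^N be an open set, let u ∈ L^1_loc(Ω,ℝ^d), let x ∈ J'_u and let q > 0. Then liminf_{t→0+} ⨍_{B_1(0)×B_1(0)} |u(x+ty) − u(x+tz)|^q d(L^N×L^N)(y,z) ≥ (1/2)|u^{j'}(x)|^q. Moreover, for every α, β > 0 the family of functions y ↦ |u(x+tαy) − u(x−tβy)| converges in L^1_loc(ℝ^N) to the constant function |u^{j'}(x)| as t → 0+. -/

import Mathlib

open MeasureTheory Metric Filter Set Topology
open scoped ENNReal NNReal

noncomputable section

/-- `ℝ^N` as a Euclidean space. -/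
abbrev Euc (N : ℕ) : Type := EuclideanSpace ℝ (Fin N)

/-- The average `⨍_s f` of an `ℝ≥0∞`-valued function over a set `s`,
with respect to the Lebesgue measure. -/
def eavg {N : ℕ} (s : Set (Euc N)) (f : Euc N → ℝ≥0∞) : ℝ≥0∞ :=
  (∫⁻ y in s, f y) / volume s

/-- The half ball `B_ρ^+(x,ν) = {y ∈ B_ρ(x) : (y−x)·ν > 0}`. -/
def halfBallP {N : ℕ} (x ν : Euc N) (ρ : ℝ) : Set (Euc N) :=
  {y | y ∈ ball x ρ ∧ 0 < (inner ℝ ν (y - x) : ℝ)}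

/-- The half ball `B_ρ^-(x,ν) = {y ∈ B_ρ(x) : (y−x)·ν < 0}`. -/
def halfBallM {N : ℕ} (x ν : Euc N) (ρ : ℝ) : Set (Euc N) :=
  {y | y ∈ ball x ρ ∧ (inner ℝ ν (y - x) : ℝ) < 0}

/-- `x` is a generalized approximate jump point of `u` with data `(h, ν)`. -/
def IsGenJump {N d : ℕ} (u : Euc N → Euc d) (x : Euc N) (h : Euc d) (ν : Euc N) : Prop :=
  ‖ν‖ = 1 ∧ h ≠ 0 ∧
    Tendsto (fun ρ => ⨅ c : Euc d,
        ((eavg (halfBallP x ν ρ) fun y => (‖u y - h - c‖₊ : ℝ≥0∞)) +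
          eavg (halfBallM x ν ρ) fun y => (‖u y - c‖₊ : ℝ≥0∞)))
      (𝓝[>] (0:ℝ)) (𝓝 0)

/-- The generalized jump set `J'_u` of `u` in `Ω`. -/
def genJumpSet {N d : ℕ} (Ω : Set (Euc N)) (u : Euc N → Euc d) : Set (Euc N) :=
  {x ∈ Ω | ∃ h ν, IsGenJump u x h ν}

lemma hyperplane_null (N : ℕ) (x ν : Euc N) (hν : ν ≠ 0) :
    volume {y : Euc N | (inner ℝ ν (y - x) : ℝ) = 0} = 0 := by
  have hker : (LinearMap.ker ((innerSL ℝ ν : Euc N →L[ℝ] ℝ) : Euc N →ₗ[ℝ] ℝ) : Submodule ℝ (Euc N)) ≠ ⊤ := by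
    intro hT
    have hmem : ν ∈ LinearMap.ker ((innerSL ℝ ν : Euc N →L[ℝ] ℝ) : Euc N →ₗ[ℝ] ℝ) := hT ▸ Submodule.mem_top
    simp only [LinearMap.mem_ker, ContinuousLinearMap.coe_coe, innerSL_apply_apply] at hmem
    rw [real_inner_self_eq_norm_sq] at hmem
    exact hν (by simpa using hmem)
  have hS : volume ((LinearMap.ker ((innerSL ℝ ν : Euc N →L[ℝ] ℝ) : Euc N →ₗ[ℝ] ℝ) : Submodule ℝ (Euc N)) : Set (Euc N)) = 0 :=
    Measure.addHaar_submodule (volume : Measure (Euc N)) _ hker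
  have hset : {y : Euc N | (inner ℝ ν (y - x) : ℝ) = 0}
      = (fun y : Euc N => y + (-x)) ⁻¹' ((LinearMap.ker ((innerSL ℝ ν : Euc N →L[ℝ] ℝ) : Euc N →ₗ[ℝ] ℝ) : Submodule ℝ (Euc N)) : Set (Euc N)) := by
    ext y
    simp only [mem_setOf_eq, mem_preimage, SetLike.mem_coe, LinearMap.mem_ker]
    rw [sub_eq_add_neg]
    constructor <;> intro hy <;> simpa using hy
  rw [hset, measure_preimage_add_right, hS]

lemma ofReal_norm_eq_coe_nnnorm {E : Type*} [SeminormedAddCommGroup E] (a : E) :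
    ENNReal.ofReal ‖a‖ = (‖a‖₊ : ℝ≥0∞) :=
  ENNReal.ofReal_eq_coe_nnreal (norm_nonneg a)

lemma isOpen_halfBallP {N : ℕ} (x ν : Euc N) (ρ : ℝ) : IsOpen (halfBallP x ν ρ) := by
  have h1 : Continuous fun y : Euc N => (inner ℝ ν (y - x) : ℝ) :=
    continuous_const.inner (continuous_id.sub continuous_const)
  exact isOpen_ball.inter (isOpen_lt continuous_const h1)

lemma isOpen_halfBallM {N : ℕ} (x ν : Euc N) (ρ : ℝ) : IsOpen (halfBallM x ν ρ) := by
  have h1 : Continuous fun y : Euc N => (inner ℝ ν (y - x) : ℝ) :=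
    continuous_const.inner (continuous_id.sub continuous_const)
  exact isOpen_ball.inter (isOpen_lt h1 continuous_const)

lemma halfBallP_translate {N : ℕ} (x ν : Euc N) (ρ : ℝ) :
    (fun y : Euc N => y + x) ⁻¹' halfBallP x ν ρ = halfBallP 0 ν ρ := by
  ext y
  simp only [halfBallP, mem_preimage, mem_setOf_eq, mem_ball, dist_eq_norm,
    add_sub_cancel_right, sub_zero]

lemma halfBallM_translate {N : ℕ} (x ν : Euc N) (ρ : ℝ) :
    (fun y : Euc N => y + x) ⁻¹' halfBallM x ν ρ = halfBallM 0 ν ρ := by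
  ext y
  simp only [halfBallM, mem_preimage, mem_setOf_eq, mem_ball, dist_eq_norm,
    add_sub_cancel_right, sub_zero]

lemma halfBallP_neg {N : ℕ} (ν : Euc N) (ρ : ℝ) :
    (fun y : Euc N => -y) ⁻¹' halfBallM 0 ν ρ = halfBallP 0 ν ρ := by
  ext y
  simp only [halfBallM, halfBallP, mem_preimage, mem_setOf_eq, mem_ball, dist_eq_norm,
    sub_zero, norm_neg, inner_neg_right]
  constructor
  · rintro ⟨h1, h2⟩; exact ⟨h1, by linarith⟩
  · rintro ⟨h1, h2⟩; exact ⟨h1, by linarith⟩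

lemma volume_halfBallM_eq_P {N : ℕ} (x ν : Euc N) (ρ : ℝ) :
    volume (halfBallM x ν ρ) = volume (halfBallP x ν ρ) := by
  have h1 : volume (halfBallM x ν ρ) = volume (halfBallM 0 ν ρ) := by
    rw [← halfBallM_translate x ν ρ, measure_preimage_add_right]
  have h2 : volume (halfBallP x ν ρ) = volume (halfBallP 0 ν ρ) := by
    rw [← halfBallP_translate x ν ρ, measure_preimage_add_right]
  rw [h1, h2, ← halfBallP_neg ν ρ]
  have : (fun y : Euc N => -y) ⁻¹' halfBallM 0 ν ρ = -(halfBallM 0 ν ρ) := rfl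
  rw [this, Measure.measure_neg]

lemma volume_halfBallP {N : ℕ} (x ν : Euc N) (hν : ν ≠ 0) (ρ : ℝ) :
    volume (halfBallP x ν ρ) = volume (ball x ρ) / 2 := by
  have hdisj : Disjoint (halfBallP x ν ρ) (halfBallM x ν ρ) := by
    rw [Set.disjoint_left]
    rintro y ⟨_, h1⟩ ⟨_, h2⟩
    linarith
  have hunion : volume (halfBallP x ν ρ ∪ halfBallM x ν ρ) = volume (ball x ρ) := by
    apply le_antisymm
    · exact measure_mono (by rintro y (⟨hy, _⟩ | ⟨hy, _⟩) <;> exact hy)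
    · have hsub : ball x ρ ⊆ (halfBallP x ν ρ ∪ halfBallM x ν ρ) ∪
          {y : Euc N | (inner ℝ ν (y - x) : ℝ) = 0} := by
        intro y hy
        rcases lt_trichotomy (inner ℝ ν (y - x) : ℝ) 0 with hlt | heq | hgt
        · exact Or.inl (Or.inr ⟨hy, hlt⟩)
        · exact Or.inr heq
        · exact Or.inl (Or.inl ⟨hy, hgt⟩)
      calc volume (ball x ρ) ≤ _ := measure_mono hsub
        _ ≤ volume (halfBallP x ν ρ ∪ halfBallM x ν ρ) +
            volume {y : Euc N | (inner ℝ ν (y - x) : ℝ) = 0} := measure_union_le _ _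
        _ = volume (halfBallP x ν ρ ∪ halfBallM x ν ρ) := by
            rw [hyperplane_null N x ν hν, add_zero]
  have hsum : volume (halfBallP x ν ρ) + volume (halfBallM x ν ρ) = volume (ball x ρ) := by
    rw [← measure_union hdisj (isOpen_halfBallM x ν ρ).measurableSet, hunion]
  rw [volume_halfBallM_eq_P x ν ρ] at hsum
  rw [ENNReal.eq_div_iff (by norm_num) (by norm_num), two_mul]
  exact hsum

lemma volume_halfBallM {N : ℕ} (x ν : Euc N) (hν : ν ≠ 0) (ρ : ℝ) :
    volume (halfBallM x ν ρ) = volume (ball x ρ) / 2 := by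
  rw [volume_halfBallM_eq_P, volume_halfBallP x ν hν]

lemma map_affine {N : ℕ} (x : Euc N) {s : ℝ} (hs : s ≠ 0) :
    Measure.map (fun y : Euc N => x + s • y) volume
      = (ENNReal.ofReal |(s ^ N)⁻¹|) • volume := by
  have hsm : Measurable (fun y : Euc N => s • y) := measurable_const_smul s
  have h1 : Measure.map (fun y : Euc N => s • y) (volume : Measure (Euc N))
      = (ENNReal.ofReal |(s ^ N)⁻¹|) • volume := by
    rw [show (fun y : Euc N => s • y) = (s • ·) from rfl,
      Measure.map_addHaar_smul volume hs, finrank_euclideanSpace_fin]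
  have h2 : (fun y : Euc N => x + s • y) = (fun z : Euc N => x + z) ∘ (fun y : Euc N => s • y) := rfl
  rw [h2, ← Measure.map_map (measurable_const_add x) hsm, h1, Measure.map_smul,
    map_add_left_eq_self volume x]

lemma lintegral_comp_affine {N : ℕ} (x : Euc N) {s : ℝ} (hs : s ≠ 0) {A : Set (Euc N)}
    (hA : MeasurableSet A) {g : Euc N → ℝ≥0∞} (hg : Measurable g) :
    ∫⁻ y in (fun y : Euc N => x + s • y) ⁻¹' A, g (x + s • y)
      = ENNReal.ofReal |(s ^ N)⁻¹| * ∫⁻ z in A, g z := by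
  have hφ : Measurable (fun y : Euc N => x + s • y) :=
    measurable_const.add (measurable_const_smul s)
  rw [← setLIntegral_map hA hg hφ, map_affine x hs, Measure.restrict_smul,
    lintegral_smul_measure, smul_eq_mul]

lemma vol_ball_scale {N : ℕ} [Nontrivial (Euc N)] (x : Euc N) {ρ : ℝ} (hρ : 0 ≤ ρ) :
    volume (ball x ρ) = ENNReal.ofReal (ρ ^ N) * volume (ball (0 : Euc N) 1) := by
  rw [Measure.addHaar_ball volume x hρ, finrank_euclideanSpace_fin]

lemma isOpen_innerPos {N : ℕ} (ν : Euc N) : IsOpen {y : Euc N | 0 < (inner ℝ ν y : ℝ)} :=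
  isOpen_lt continuous_const (continuous_const.inner continuous_id)

lemma isOpen_innerNeg {N : ℕ} (ν : Euc N) : IsOpen {y : Euc N | (inner ℝ ν y : ℝ) < 0} :=
  isOpen_lt (continuous_const.inner continuous_id) continuous_const

set_option maxHeartbeats 2000000 in
/-- Let `Ω ⊆ ℝ^N` be open, `u ∈ L^1_loc(Ω, ℝ^d)`, `x ∈ J'_u` with
generalized jump data `(h, ν)`, and `q > 0`. Then
`liminf_{t→0+} ⨍_{B_1(0)×B_1(0)} |u(x+ty) − u(x+tz)|^q d(L^N×L^N)(y,z) ≥ (1/2)|u^{j'}(x)|^q`,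
and for every `α, β > 0` the functions `y ↦ |u(x+tαy) − u(x−tβy)|` converge in
`L^1_loc(ℝ^N)` to the constant `|u^{j'}(x)|` as `t → 0+`. -/
theorem gen_jump_rescaled_family
    {N d : ℕ} {Ω : Set (Euc N)} (hΩ : IsOpen Ω)
    (u : Euc N → Euc d) (hu : LocallyIntegrableOn u Ω volume)
    (x : Euc N) (hx : x ∈ Ω)
    (h : Euc d) (ν : Euc N) (hjump : IsGenJump u x h ν)
    {q : ℝ} (hq : 0 < q) :
    ((2⁻¹ : ℝ≥0∞) * (‖h‖₊ : ℝ≥0∞) ^ q ≤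
      liminf (fun t : ℝ =>
        (∫⁻ p in (ball (0 : Euc N) 1) ×ˢ (ball (0 : Euc N) 1),
            (‖u (x + t • p.1) - u (x + t • p.2)‖₊ : ℝ≥0∞) ^ q) /
          volume ((ball (0 : Euc N) 1) ×ˢ (ball (0 : Euc N) 1))) (𝓝[>] (0:ℝ))) ∧
    ∀ α β : ℝ, 0 < α → 0 < β → ∀ K : Set (Euc N), IsCompact K →
      Tendsto (fun t : ℝ => ∫⁻ y in K,
          ENNReal.ofReal |‖u (x + (t * α) • y) - u (x - (t * β) • y)‖ - ‖h‖|)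
        (𝓝[>] (0:ℝ)) (𝓝 0) := by
  obtain ⟨hν1, hh0, htend⟩ := hjump
  have hν : ν ≠ 0 := by
    intro h0; rw [h0, norm_zero] at hν1; exact one_ne_zero hν1.symm
  haveI : Nontrivial (Euc N) := nontrivial_of_ne ν 0 hν
  -- a closed ball inside Ω
  obtain ⟨ε₀, hε₀, hball⟩ := Metric.isOpen_iff.1 hΩ x hx
  set r0 : ℝ := ε₀ / 2 with hr0def
  have hr0 : 0 < r0 := by positivity
  have hcb : closedBall x r0 ⊆ Ω :=
    (closedBall_subset_ball (by simp [hr0def]; linarith)).trans hball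
  have hint : IntegrableOn u (closedBall x r0) volume :=
    hu.integrableOn_compact_subset hcb (isCompact_closedBall x r0)
  have hmeas : AEStronglyMeasurable u (volume.restrict (closedBall x r0)) :=
    hint.aestronglyMeasurable
  set w : Euc N → Euc d := hmeas.mk u with hwdef
  have hwmeas : Measurable w := hmeas.stronglyMeasurable_mk.measurable
  have huw : volume ({y | u y ≠ w y} ∩ closedBall x r0) = 0 := by
    have h1 := hmeas.ae_eq_mk
    rw [Filter.EventuallyEq, ae_iff] at h1
    rwa [Measure.restrict_apply' measurableSet_closedBall] at h1
  obtain ⟨Z, hZsub, hZm, hZ0⟩ := exists_measurable_superset_of_null huw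
  have haeA : ∀ A : Set (Euc N), MeasurableSet A → A ⊆ closedBall x r0 →
      (∀ᵐ y ∂volume.restrict A, u y = w y) := by
    intro A hAm hAsub
    rw [ae_iff, Measure.restrict_apply' hAm]
    refine measure_mono_null ?_ hZ0
    exact fun y hy => hZsub ⟨hy.1, hAsub hy.2⟩
  have hpull : ∀ s : ℝ, s ≠ 0 → volume ((fun y : Euc N => x + s • y) ⁻¹' Z) = 0 := by
    intro s hs
    have h1 := lintegral_comp_affine x hs hZm (measurable_const : Measurable (fun _ : Euc N => (1:ℝ≥0∞)))
    rw [setLIntegral_one, setLIntegral_one, hZ0, mul_zero] at h1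
    exact h1
  set V : ℝ≥0∞ := volume (ball (0 : Euc N) 1) with hVdef
  have hV0 : V ≠ 0 := (measure_ball_pos volume 0 one_pos).ne'
  have hVt : V ≠ ∞ := measure_ball_lt_top.ne
  -- the key consequence of the jump condition
  have hH : ∀ ε : ℝ≥0∞, 0 < ε → ∀ᶠ ρ in 𝓝[>] (0:ℝ), 0 < ρ ∧ ρ ≤ r0 ∧ ∃ c : Euc d,
      (∫⁻ y in halfBallP x ν ρ, (‖w y - h - c‖₊ : ℝ≥0∞)) ≤ ε * (ENNReal.ofReal (ρ ^ N) * V) ∧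
      (∫⁻ y in halfBallM x ν ρ, (‖w y - c‖₊ : ℝ≥0∞)) ≤ ε * (ENNReal.ofReal (ρ ^ N) * V) := by
    intro ε hε
    have hev1 : ∀ᶠ ρ in 𝓝[>] (0:ℝ), (⨅ c : Euc d,
        ((eavg (halfBallP x ν ρ) fun y => (‖u y - h - c‖₊ : ℝ≥0∞)) +
          eavg (halfBallM x ν ρ) fun y => (‖u y - c‖₊ : ℝ≥0∞))) < ε / 2 :=
      htend.eventually_lt_const (ENNReal.half_pos hε.ne')
    have hev2 : ∀ᶠ ρ in 𝓝[>] (0:ℝ), ρ < r0 :=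
      Filter.Eventually.filter_mono nhdsWithin_le_nhds (eventually_lt_nhds hr0)
    filter_upwards [hev1, hev2, self_mem_nhdsWithin] with ρ h1 h2 (h3 : 0 < ρ)
    refine ⟨h3, h2.le, ?_⟩
    obtain ⟨c, hc⟩ := iInf_lt_iff.1 h1
    have hballρ : volume (ball x ρ) = ENNReal.ofReal (ρ ^ N) * V := vol_ball_scale x h3.le
    have hb0 : volume (ball x ρ) ≠ 0 := (measure_ball_pos volume x h3).ne'
    have hbt : volume (ball x ρ) ≠ ∞ := measure_ball_lt_top.ne
    have hPvol : volume (halfBallP x ν ρ) = volume (ball x ρ) / 2 := volume_halfBallP x ν hν ρ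
    have hMvol : volume (halfBallM x ν ρ) = volume (ball x ρ) / 2 := volume_halfBallM x ν hν ρ
    have hd0 : volume (ball x ρ) / 2 ≠ 0 := by
      simp only [ne_eq, ENNReal.div_eq_zero_iff, hb0, false_or]; norm_num
    have hdt : volume (ball x ρ) / 2 ≠ ∞ :=
      (lt_of_le_of_lt ENNReal.half_le_self measure_ball_lt_top).ne
    have hhalf : ε / 2 * (volume (ball x ρ) / 2) ≤ ε * volume (ball x ρ) :=
      mul_le_mul' ENNReal.half_le_self ENNReal.half_le_self
    have hsubP : halfBallP x ν ρ ⊆ closedBall x r0 := fun y hy =>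
      mem_closedBall.2 (le_of_lt (lt_of_lt_of_le (mem_ball.1 hy.1) h2.le))
    have hsubM : halfBallM x ν ρ ⊆ closedBall x r0 := fun y hy =>
      mem_closedBall.2 (le_of_lt (lt_of_lt_of_le (mem_ball.1 hy.1) h2.le))
    refine ⟨c, ?_, ?_⟩
    · have hPlt : eavg (halfBallP x ν ρ) (fun y => (‖u y - h - c‖₊ : ℝ≥0∞)) < ε / 2 :=
        lt_of_le_of_lt le_self_add hc
      rw [eavg, hPvol] at hPlt
      have hLu : (∫⁻ y in halfBallP x ν ρ, (‖u y - h - c‖₊ : ℝ≥0∞))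
          ≤ ε * volume (ball x ρ) :=
        le_trans (le_of_lt ((ENNReal.div_lt_iff (Or.inl hd0) (Or.inl hdt)).1 hPlt)) hhalf
      have hLw : (∫⁻ y in halfBallP x ν ρ, (‖w y - h - c‖₊ : ℝ≥0∞))
          = ∫⁻ y in halfBallP x ν ρ, (‖u y - h - c‖₊ : ℝ≥0∞) := by
        refine lintegral_congr_ae ?_
        filter_upwards [haeA _ (isOpen_halfBallP x ν ρ).measurableSet hsubP] with y hy
        rw [hy]
      rw [hLw, ← hballρ]
      exact hLu
    · have hMlt : eavg (halfBallM x ν ρ) (fun y => (‖u y - c‖₊ : ℝ≥0∞)) < ε / 2 :=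
        lt_of_le_of_lt le_add_self hc
      rw [eavg, hMvol] at hMlt
      have hLu : (∫⁻ y in halfBallM x ν ρ, (‖u y - c‖₊ : ℝ≥0∞))
          ≤ ε * volume (ball x ρ) :=
        le_trans (le_of_lt ((ENNReal.div_lt_iff (Or.inl hd0) (Or.inl hdt)).1 hMlt)) hhalf
      have hLw : (∫⁻ y in halfBallM x ν ρ, (‖w y - c‖₊ : ℝ≥0∞))
          = ∫⁻ y in halfBallM x ν ρ, (‖u y - c‖₊ : ℝ≥0∞) := by
        refine lintegral_congr_ae ?_
        filter_upwards [haeA _ (isOpen_halfBallM x ν ρ).measurableSet hsubM] with y hy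
        rw [hy]
      rw [hLw, ← hballρ]
      exact hLu
  constructor
  -- Part 1
  · have hprodvol : volume ((ball (0 : Euc N) 1) ×ˢ (ball (0 : Euc N) 1)) = V * V := by
      rw [Measure.volume_eq_prod, Measure.prod_prod]
    set P1 : Set (Euc N) := halfBallP 0 ν 1 with hP1def
    set M1 : Set (Euc N) := halfBallM 0 ν 1 with hM1def
    have hP1vol : volume P1 = V / 2 := volume_halfBallP 0 ν hν 1
    have hM1vol : volume M1 = V / 2 := volume_halfBallM 0 ν hν 1
    have hP1sub : P1 ⊆ ball (0 : Euc N) 1 := fun y hy => hy.1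
    have hM1sub : M1 ⊆ ball (0 : Euc N) 1 := fun y hy => hy.1
    have hVV0 : V * V ≠ 0 := mul_ne_zero hV0 hV0
    have hVVt : V * V ≠ ∞ := ENNReal.mul_ne_top hVt hVt
    have hV2t : V / 2 ≠ ∞ := (lt_of_le_of_lt ENNReal.half_le_self hVt.lt_top).ne
    have hV20 : V / 2 ≠ 0 := by
      simp only [ne_eq, ENNReal.div_eq_zero_iff, hV0, false_or]; norm_num
    have hnorm_h : (0:ℝ) < ‖h‖ := norm_pos_iff.2 hh0
    set bound : ℝ → ℝ≥0∞ := fun δ =>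
      ENNReal.ofReal (‖h‖ - 2*δ) ^ q *
        (2 * ((V/2 - ENNReal.ofReal δ * V) * (V/2 - ENNReal.ofReal δ * V))) / (V*V) with hbounddef
    have hkey : ∀ δ : ℝ, 0 < δ → bound δ ≤
        liminf (fun t : ℝ =>
          (∫⁻ p in (ball (0 : Euc N) 1) ×ˢ (ball (0 : Euc N) 1),
              (‖u (x + t • p.1) - u (x + t • p.2)‖₊ : ℝ≥0∞) ^ q) /
            volume ((ball (0 : Euc N) 1) ×ˢ (ball (0 : Euc N) 1))) (𝓝[>] (0:ℝ)) := by
      intro δ hδ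
      refine le_liminf_of_le (by isBoundedDefault) ?_
      have hεδ : (0:ℝ≥0∞) < ENNReal.ofReal δ * ENNReal.ofReal δ :=
        ENNReal.mul_pos (ENNReal.ofReal_pos.2 hδ).ne' (ENNReal.ofReal_pos.2 hδ).ne'
      filter_upwards [hH (ENNReal.ofReal δ * ENNReal.ofReal δ) hεδ, self_mem_nhdsWithin]
        with t hev (ht0 : 0 < t)
      obtain ⟨_, htr0, c, hcP, hcM⟩ := hev
      -- preimage identities
      have hpreP : (fun y : Euc N => x + t • y) ⁻¹' (halfBallP x ν t) = P1 := by
        ext y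
        simp only [hP1def, halfBallP, mem_preimage, mem_setOf_eq, mem_ball, dist_eq_norm,
          add_sub_cancel_left, sub_zero, norm_smul, Real.norm_eq_abs, abs_of_pos ht0,
          real_inner_smul_right]
        constructor
        · rintro ⟨h1, h2⟩
          exact ⟨by nlinarith, by nlinarith⟩
        · rintro ⟨h1, h2⟩
          exact ⟨by nlinarith [norm_nonneg y], by nlinarith⟩
      have hpreM : (fun y : Euc N => x + t • y) ⁻¹' (halfBallM x ν t) = M1 := by
        ext y
        simp only [hM1def, halfBallM, mem_preimage, mem_setOf_eq, mem_ball, dist_eq_norm,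
          add_sub_cancel_left, sub_zero, norm_smul, Real.norm_eq_abs, abs_of_pos ht0,
          real_inner_smul_right]
        constructor
        · rintro ⟨h1, h2⟩
          exact ⟨by nlinarith, by nlinarith⟩
        · rintro ⟨h1, h2⟩
          exact ⟨by nlinarith [norm_nonneg y], by nlinarith⟩
      set f1 : Euc N → ℝ≥0∞ := fun y => (‖w (x + t • y) - h - c‖₊ : ℝ≥0∞) with hf1def
      set f2 : Euc N → ℝ≥0∞ := fun y => (‖w (x + t • y) - c‖₊ : ℝ≥0∞) with hf2def
      have hφm : Measurable (fun y : Euc N => x + t • y) :=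
        measurable_const.add (measurable_const_smul t)
      have hf1m : Measurable f1 :=
        (((hwmeas.comp hφm).sub measurable_const).sub measurable_const).nnnorm.coe_nnreal_ennreal
      have hf2m : Measurable f2 := ((hwmeas.comp hφm).sub measurable_const).nnnorm.coe_nnreal_ennreal
      have htN0 : (t : ℝ) ^ N ≠ 0 := pow_ne_zero N ht0.ne'
      have hcancel : ENNReal.ofReal |(t ^ N)⁻¹| * ENNReal.ofReal (t ^ N) = 1 := by
        rw [abs_of_nonneg (by positivity), ← ENNReal.ofReal_mul (by positivity),
          inv_mul_cancel₀ htN0, ENNReal.ofReal_one]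
      have hI1 : (∫⁻ y in P1, f1 y) ≤ ENNReal.ofReal δ * (ENNReal.ofReal δ * V) := by
        calc (∫⁻ y in P1, f1 y)
            = ENNReal.ofReal |(t ^ N)⁻¹| * ∫⁻ z in halfBallP x ν t, (‖w z - h - c‖₊ : ℝ≥0∞) := by
              rw [← hpreP]
              exact lintegral_comp_affine x ht0.ne'
                (isOpen_halfBallP x ν t).measurableSet
                (((hwmeas.sub measurable_const).sub measurable_const).nnnorm.coe_nnreal_ennreal)
          _ ≤ ENNReal.ofReal |(t ^ N)⁻¹| *
              ((ENNReal.ofReal δ * ENNReal.ofReal δ) * (ENNReal.ofReal (t ^ N) * V)) :=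
              mul_le_mul_right hcP _
          _ = (ENNReal.ofReal |(t ^ N)⁻¹| * ENNReal.ofReal (t ^ N)) *
              (ENNReal.ofReal δ * (ENNReal.ofReal δ * V)) := by ring
          _ = ENNReal.ofReal δ * (ENNReal.ofReal δ * V) := by rw [hcancel, one_mul]
      have hI2 : (∫⁻ y in M1, f2 y) ≤ ENNReal.ofReal δ * (ENNReal.ofReal δ * V) := by
        calc (∫⁻ y in M1, f2 y)
            = ENNReal.ofReal |(t ^ N)⁻¹| * ∫⁻ z in halfBallM x ν t, (‖w z - c‖₊ : ℝ≥0∞) := by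
              rw [← hpreM]
              exact lintegral_comp_affine x ht0.ne'
                (isOpen_halfBallM x ν t).measurableSet
                ((hwmeas.sub measurable_const).nnnorm.coe_nnreal_ennreal)
          _ ≤ ENNReal.ofReal |(t ^ N)⁻¹| *
              ((ENNReal.ofReal δ * ENNReal.ofReal δ) * (ENNReal.ofReal (t ^ N) * V)) :=
              mul_le_mul_right hcM _
          _ = (ENNReal.ofReal |(t ^ N)⁻¹| * ENNReal.ofReal (t ^ N)) *
              (ENNReal.ofReal δ * (ENNReal.ofReal δ * V)) := by ring
          _ = ENNReal.ofReal δ * (ENNReal.ofReal δ * V) := by rw [hcancel, one_mul]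
      -- bad sets via Chebyshev
      set Bad1 : Set (Euc N) := {y : Euc N | ENNReal.ofReal δ ≤ f1 y} with hBad1def
      set Bad2 : Set (Euc N) := {y : Euc N | ENNReal.ofReal δ ≤ f2 y} with hBad2def
      have hδ0' : ENNReal.ofReal δ ≠ 0 := (ENNReal.ofReal_pos.2 hδ).ne'
      have hBad1vol : volume (Bad1 ∩ P1) ≤ ENNReal.ofReal δ * V := by
        have hcheb := mul_meas_ge_le_lintegral₀ (μ := volume.restrict P1)
          hf1m.aemeasurable (ENNReal.ofReal δ)
        rw [Measure.restrict_apply' (isOpen_halfBallP 0 ν 1).measurableSet] at hcheb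
        have h2 := le_trans hcheb hI1
        rwa [ENNReal.mul_le_mul_iff_right hδ0' ENNReal.ofReal_ne_top] at h2
      have hBad2vol : volume (Bad2 ∩ M1) ≤ ENNReal.ofReal δ * V := by
        have hcheb := mul_meas_ge_le_lintegral₀ (μ := volume.restrict M1)
          hf2m.aemeasurable (ENNReal.ofReal δ)
        rw [Measure.restrict_apply' (isOpen_halfBallM 0 ν 1).measurableSet] at hcheb
        have h2 := le_trans hcheb hI2
        rwa [ENNReal.mul_le_mul_iff_right hδ0' ENNReal.ofReal_ne_top] at h2
      set G1 : Set (Euc N) := P1 \ (Bad1 ∩ P1) with hG1def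
      set G2 : Set (Euc N) := M1 \ (Bad2 ∩ M1) with hG2def
      set W : ℝ≥0∞ := V/2 - ENNReal.ofReal δ * V with hWdef
      have hG1vol : W ≤ volume G1 :=
        le_trans (tsub_le_tsub (le_of_eq hP1vol.symm) hBad1vol) le_measure_diff
      have hG2vol : W ≤ volume G2 :=
        le_trans (tsub_le_tsub (le_of_eq hM1vol.symm) hBad2vol) le_measure_diff
      have hG1m : MeasurableSet G1 :=
        (isOpen_halfBallP 0 ν 1).measurableSet.diff
          ((measurableSet_le measurable_const hf1m).inter
            (isOpen_halfBallP 0 ν 1).measurableSet)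
      have hG2m : MeasurableSet G2 :=
        (isOpen_halfBallM 0 ν 1).measurableSet.diff
          ((measurableSet_le measurable_const hf2m).inter
            (isOpen_halfBallM 0 ν 1).measurableSet)
      set Good : Set (Euc N × Euc N) := (G1 ×ˢ G2) ∪ (G2 ×ˢ G1) with hGooddef
      have hGoodm : MeasurableSet Good := (hG1m.prod hG2m).union (hG2m.prod hG1m)
      have hG1P : G1 ⊆ P1 := diff_subset
      have hG2M : G2 ⊆ M1 := diff_subset
      have hGoodsub : Good ⊆ (ball (0 : Euc N) 1) ×ˢ (ball (0 : Euc N) 1) := by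
        rintro ⟨y, z⟩ (⟨hy, hz⟩ | ⟨hy, hz⟩)
        · exact ⟨hP1sub (hG1P hy), hM1sub (hG2M hz)⟩
        · exact ⟨hM1sub (hG2M hy), hP1sub (hG1P hz)⟩
      have hGoodvol : 2 * (W * W) ≤ volume Good := by
        have hdisj : Disjoint (G1 ×ˢ G2) (G2 ×ˢ G1) := by
          rw [Set.disjoint_left]
          rintro ⟨y, z⟩ ⟨hy1, _⟩ ⟨hy2, _⟩
          have l1 := (hG1P hy1).2
          have l2 := (hG2M hy2).2
          linarith [l1, l2]
        rw [measure_union hdisj (hG2m.prod hG1m), Measure.volume_eq_prod, Measure.prod_prod,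
          Measure.prod_prod, two_mul]
        exact add_le_add (mul_le_mul' hG1vol hG2vol) (mul_le_mul' hG2vol hG1vol)
      -- pointwise lower bound on Good
      have hsmall1 : ∀ y ∈ G1, ‖w (x + t • y) - h - c‖ < δ := by
        rintro y ⟨hyP, hyB⟩
        have hnb : ¬ (ENNReal.ofReal δ ≤ f1 y) := fun hB => hyB ⟨hB, hyP⟩
        have hnb2 : ENNReal.ofReal ‖w (x + t • y) - h - c‖ < ENNReal.ofReal δ := by
          rw [ofReal_norm_eq_coe_nnnorm]; exact not_le.1 hnb
        exact (ENNReal.ofReal_lt_ofReal_iff hδ).1 hnb2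
      have hsmall2 : ∀ y ∈ G2, ‖w (x + t • y) - c‖ < δ := by
        rintro y ⟨hyM, hyB⟩
        have hnb : ¬ (ENNReal.ofReal δ ≤ f2 y) := fun hB => hyB ⟨hB, hyM⟩
        have hnb2 : ENNReal.ofReal ‖w (x + t • y) - c‖ < ENNReal.ofReal δ := by
          rw [ofReal_norm_eq_coe_nnnorm]; exact not_le.1 hnb
        exact (ENNReal.ofReal_lt_ofReal_iff hδ).1 hnb2
      have hreal : ∀ a b : Euc d, ‖a - h - c‖ < δ → ‖b - c‖ < δ → ‖h‖ - 2*δ ≤ ‖a - b‖ := by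
        intro a b h1 h2
        have hid : a - b = h + ((a - h - c) - (b - c)) := by abel
        have h3 : |‖h + ((a - h - c) - (b - c))‖ - ‖h‖| ≤ ‖(a - h - c) - (b - c)‖ := by
          have := abs_norm_sub_norm_le (h + ((a - h - c) - (b - c))) h
          rwa [add_sub_cancel_left] at this
        have h4 : ‖(a - h - c) - (b - c)‖ ≤ ‖a - h - c‖ + ‖b - c‖ := norm_sub_le _ _
        rw [hid]
        have h5 := abs_le.1 h3
        linarith [h5.1]
      have hgood_pt : ∀ p : Euc N × Euc N, p ∈ Good →
          ENNReal.ofReal (‖h‖ - 2*δ) ^ q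
            ≤ (‖w (x + t • p.1) - w (x + t • p.2)‖₊ : ℝ≥0∞) ^ q := by
        rintro ⟨y, z⟩ hp
        have hnorm : ‖h‖ - 2*δ ≤ ‖w (x + t • y) - w (x + t • z)‖ := by
          rcases hp with ⟨hy, hz⟩ | ⟨hy, hz⟩
          · exact hreal _ _ (hsmall1 y hy) (hsmall2 z hz)
          · rw [norm_sub_rev]
            exact hreal _ _ (hsmall1 z hz) (hsmall2 y hy)
        refine ENNReal.rpow_le_rpow ?_ hq.le
        rw [← ofReal_norm_eq_coe_nnnorm]
        exact ENNReal.ofReal_le_ofReal hnorm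
      have hFm : Measurable (fun p : Euc N × Euc N =>
          (‖w (x + t • p.1) - w (x + t • p.2)‖₊ : ℝ≥0∞) ^ q) := by
        have hφ1 : Measurable (fun p : Euc N × Euc N => x + t • p.1) :=
          measurable_const.add (measurable_fst.const_smul t)
        have hφ2 : Measurable (fun p : Euc N × Euc N => x + t • p.2) :=
          measurable_const.add (measurable_snd.const_smul t)
        exact ENNReal.continuous_rpow_const.measurable.comp
          (((hwmeas.comp hφ1).sub (hwmeas.comp hφ2)).nnnorm.coe_nnreal_ennreal)
      have hlow : ENNReal.ofReal (‖h‖ - 2*δ) ^ q * (2 * (W * W))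
          ≤ ∫⁻ p in (ball (0 : Euc N) 1) ×ˢ (ball (0 : Euc N) 1),
              (‖w (x + t • p.1) - w (x + t • p.2)‖₊ : ℝ≥0∞) ^ q := by
        calc ENNReal.ofReal (‖h‖ - 2*δ) ^ q * (2 * (W * W))
            ≤ ENNReal.ofReal (‖h‖ - 2*δ) ^ q * volume Good := mul_le_mul_right hGoodvol _
          _ = ∫⁻ _ in Good, ENNReal.ofReal (‖h‖ - 2*δ) ^ q := (setLIntegral_const _ _).symm
          _ ≤ ∫⁻ p in Good, (‖w (x + t • p.1) - w (x + t • p.2)‖₊ : ℝ≥0∞) ^ q :=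
              setLIntegral_mono' hGoodm hgood_pt
          _ ≤ _ := lintegral_mono_set hGoodsub
      -- replace w by u
      have hprodm : MeasurableSet ((ball (0 : Euc N) 1) ×ˢ (ball (0 : Euc N) 1)) :=
        measurableSet_ball.prod measurableSet_ball
      have hDnull : volume ((fun y : Euc N => x + t • y) ⁻¹' Z) = 0 := hpull t ht0.ne'
      have hin_cb : ∀ y ∈ ball (0 : Euc N) 1, x + t • y ∈ closedBall x r0 := by
        intro y hy
        rw [mem_closedBall, dist_eq_norm, add_sub_cancel_left, norm_smul, Real.norm_eq_abs,
          abs_of_pos ht0]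
        have hy1 : ‖y‖ < 1 := by simpa [mem_ball, dist_eq_norm] using hy
        nlinarith [norm_nonneg y]
      have hae1 : ∀ᵐ p ∂(volume.restrict ((ball (0 : Euc N) 1) ×ˢ (ball (0 : Euc N) 1))),
          u (x + t • (p : Euc N × Euc N).1) = w (x + t • p.1) := by
        rw [ae_iff, Measure.restrict_apply' hprodm]
        refine measure_mono_null (fun p hp => ?_)
          (show volume (((fun y : Euc N => x + t • y) ⁻¹' Z) ×ˢ (univ : Set (Euc N))) = 0 by
            rw [Measure.volume_eq_prod, Measure.prod_prod, hDnull, zero_mul])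
        exact Set.mem_prod.2 ⟨mem_preimage.2 (hZsub ⟨hp.1, hin_cb _ hp.2.1⟩), mem_univ _⟩
      have hae2 : ∀ᵐ p ∂(volume.restrict ((ball (0 : Euc N) 1) ×ˢ (ball (0 : Euc N) 1))),
          u (x + t • (p : Euc N × Euc N).2) = w (x + t • p.2) := by
        rw [ae_iff, Measure.restrict_apply' hprodm]
        refine measure_mono_null (fun p hp => ?_)
          (show volume ((univ : Set (Euc N)) ×ˢ ((fun y : Euc N => x + t • y) ⁻¹' Z)) = 0 by
            rw [Measure.volume_eq_prod, Measure.prod_prod, hDnull, mul_zero])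
        exact Set.mem_prod.2 ⟨mem_univ _, mem_preimage.2 (hZsub ⟨hp.1, hin_cb _ hp.2.2⟩)⟩
      have hnum_eq : (∫⁻ p in (ball (0 : Euc N) 1) ×ˢ (ball (0 : Euc N) 1),
            (‖u (x + t • p.1) - u (x + t • p.2)‖₊ : ℝ≥0∞) ^ q)
          = ∫⁻ p in (ball (0 : Euc N) 1) ×ˢ (ball (0 : Euc N) 1),
            (‖w (x + t • p.1) - w (x + t • p.2)‖₊ : ℝ≥0∞) ^ q := by
        refine lintegral_congr_ae ?_
        filter_upwards [hae1, hae2] with p h1 h2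
        rw [h1, h2]
      rw [hbounddef]
      rw [hnum_eq, hprodvol]
      exact ENNReal.div_le_div_right hlow _
    -- pass to the limit δ → 0+
    have htarget : ENNReal.ofReal ‖h‖ ^ q * (2 * ((V/2) * (V/2))) / (V*V)
        = 2⁻¹ * (‖h‖₊ : ℝ≥0∞) ^ q := by
      have e2 : 2 * ((V/2) * (V/2)) = 2⁻¹ * (V*V) := by
        rw [div_eq_mul_inv]
        calc 2 * ((V * 2⁻¹) * (V * 2⁻¹)) = (2 * 2⁻¹) * (2⁻¹ * (V * V)) := by ring
          _ = 2⁻¹ * (V*V) := by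
            rw [ENNReal.mul_inv_cancel (by norm_num) (by norm_num), one_mul]
      rw [e2, ofReal_norm_eq_coe_nnnorm]
      have e3 : (‖h‖₊ : ℝ≥0∞) ^ q * (2⁻¹ * (V*V)) / (V*V)
          = (2⁻¹ * (‖h‖₊ : ℝ≥0∞) ^ q) * ((V*V) / (V*V)) := by
        rw [div_eq_mul_inv, div_eq_mul_inv]; ring
      rw [e3, ENNReal.div_self hVV0 hVVt, mul_one]
    have hlim : Tendsto bound (𝓝[>] (0:ℝ)) (𝓝 (2⁻¹ * (‖h‖₊ : ℝ≥0∞) ^ q)) := by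
      rw [← htarget]
      have t1 : Tendsto (fun δ : ℝ => ENNReal.ofReal (‖h‖ - 2*δ)) (𝓝[>] (0:ℝ))
          (𝓝 (ENNReal.ofReal ‖h‖)) := by
        have tr : Tendsto (fun δ : ℝ => ‖h‖ - 2*δ) (𝓝 (0:ℝ)) (𝓝 (‖h‖ - 2*0)) :=
          (continuous_const.sub (continuous_const.mul continuous_id)).tendsto 0
        rw [mul_zero, sub_zero] at tr
        exact ((ENNReal.continuous_ofReal.tendsto _).comp tr).mono_left nhdsWithin_le_nhds
      have t1q : Tendsto (fun δ : ℝ => ENNReal.ofReal (‖h‖ - 2*δ) ^ q) (𝓝[>] (0:ℝ))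
          (𝓝 (ENNReal.ofReal ‖h‖ ^ q)) :=
        (ENNReal.continuous_rpow_const.tendsto _).comp t1
      have t2 : Tendsto (fun δ : ℝ => V/2 - ENNReal.ofReal δ * V) (𝓝[>] (0:ℝ)) (𝓝 (V/2)) := by
        have t2a : Tendsto (fun δ : ℝ => ENNReal.ofReal δ * V) (𝓝[>] (0:ℝ)) (𝓝 0) := by
          have : Tendsto (fun δ : ℝ => ENNReal.ofReal δ) (𝓝[>] (0:ℝ)) (𝓝 0) := by
            have := (ENNReal.continuous_ofReal.tendsto (0:ℝ)).mono_left
              (nhdsWithin_le_nhds : 𝓝[>] (0:ℝ) ≤ 𝓝 0)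
            simpa using this
          have h2 := ENNReal.Tendsto.mul_const this (Or.inr hVt)
          simpa using h2
        have := ENNReal.Tendsto.sub (tendsto_const_nhds (x := V/2)) t2a (Or.inl hV2t)
        simpa using this
      have t3 : Tendsto (fun δ : ℝ =>
          2 * ((V/2 - ENNReal.ofReal δ * V) * (V/2 - ENNReal.ofReal δ * V))) (𝓝[>] (0:ℝ))
          (𝓝 (2 * ((V/2) * (V/2)))) := by
        have tm := ENNReal.Tendsto.mul t2 (Or.inl hV20) t2 (Or.inr hV2t)
        exact ENNReal.Tendsto.const_mul tm (Or.inr ENNReal.ofNat_ne_top)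
      have hfin3 : 2 * ((V/2) * (V/2)) ≠ ∞ :=
        ENNReal.mul_ne_top ENNReal.ofNat_ne_top (ENNReal.mul_ne_top hV2t hV2t)
      have hne1 : ENNReal.ofReal ‖h‖ ^ q ≠ ∞ :=
        ENNReal.rpow_ne_top_of_nonneg hq.le ENNReal.ofReal_ne_top
      have t4 := ENNReal.Tendsto.mul t1q (Or.inr hfin3) t3 (Or.inr hne1)
      have t5 := ENNReal.Tendsto.mul_const (b := (V*V)⁻¹) t4
        (Or.inr (ENNReal.inv_ne_top.2 hVV0))
      simpa only [div_eq_mul_inv, hbounddef] using t5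
    have hev : ∀ᶠ δ in 𝓝[>] (0:ℝ), bound δ ≤
        liminf (fun t : ℝ =>
          (∫⁻ p in (ball (0 : Euc N) 1) ×ˢ (ball (0 : Euc N) 1),
              (‖u (x + t • p.1) - u (x + t • p.2)‖₊ : ℝ≥0∞) ^ q) /
            volume ((ball (0 : Euc N) 1) ×ˢ (ball (0 : Euc N) 1))) (𝓝[>] (0:ℝ)) := by
      filter_upwards [self_mem_nhdsWithin] with δ (hδ : 0 < δ)
      exact hkey δ hδ
    exact le_of_tendsto hlim hev
  -- Part 2
  · intro α β hα hβ K hK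
    obtain ⟨R, hR0, hKR⟩ := hK.isBounded.subset_ball_lt 0 0
    set m : ℝ := max α β with hmdef
    have hm : 0 < m := lt_of_lt_of_le hα (le_max_left _ _)
    have hαm : α ≤ m := le_max_left _ _
    have hβm : β ≤ m := le_max_right _ _
    set A1 : ℝ≥0∞ := ENNReal.ofReal ((m * R / α) ^ N) with hA1def
    set A2 : ℝ≥0∞ := ENNReal.ofReal ((m * R / β) ^ N) with hA2def
    set Cm : ℝ≥0∞ := 2 * V * (A1 + A2) + 1 with hCmdef
    have hC1 : (1 : ℝ≥0∞) ≤ Cm := le_add_self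
    have hC0 : Cm ≠ 0 := fun h0 => by simp [h0] at hC1
    have hCt : Cm ≠ ∞ := by
      rw [hCmdef]
      refine ENNReal.add_ne_top.2 ⟨?_, ENNReal.one_ne_top⟩
      exact ENNReal.mul_ne_top (ENNReal.mul_ne_top (by norm_num) hVt)
        (ENNReal.add_ne_top.2 ⟨ENNReal.ofReal_ne_top, ENNReal.ofReal_ne_top⟩)
    rw [ENNReal.tendsto_nhds_zero]
    intro ε hε
    set ε' : ℝ≥0∞ := ε / Cm with hε'def
    have hε'pos : 0 < ε' := ENNReal.div_pos hε.ne' hCt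
    have hmap : Tendsto (fun t : ℝ => t * (m * R)) (𝓝[>] (0:ℝ)) (𝓝[>] (0:ℝ)) := by
      rw [tendsto_nhdsWithin_iff]
      constructor
      · have h1 : Tendsto (fun t : ℝ => t * (m * R)) (𝓝 (0:ℝ)) (𝓝 (0 * (m * R))) :=
          (continuous_mul_right (m * R)).tendsto 0
        rw [zero_mul] at h1
        exact h1.mono_left nhdsWithin_le_nhds
      · filter_upwards [self_mem_nhdsWithin] with t (ht : 0 < t)
        exact mul_pos ht (mul_pos hm hR0)
    filter_upwards [hmap.eventually (hH ε' hε'pos), self_mem_nhdsWithin] with t hev (ht0 : 0 < t)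
    obtain ⟨hρ0, hρr0, c, hcP, hcM⟩ := hev
    set ρ : ℝ := t * (m * R) with hρdef
    have hs1 : (t * α) ≠ 0 := (mul_pos ht0 hα).ne'
    have hs2 : (-(t * β)) ≠ 0 := (neg_ne_zero.2 (mul_pos ht0 hβ).ne')
    have hsub_eq : ∀ y : Euc N, x - (t * β) • y = x + (-(t * β)) • y := by
      intro y; rw [neg_smul, sub_eq_add_neg]
    have hmem1 : ∀ y ∈ ball (0 : Euc N) R, x + (t * α) • y ∈ ball x ρ := by
      intro y hy
      rw [mem_ball, dist_eq_norm, add_sub_cancel_left, norm_smul, Real.norm_eq_abs,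
        abs_of_pos (mul_pos ht0 hα)]
      have hyR : ‖y‖ < R := by simpa [mem_ball, dist_eq_norm] using hy
      calc t * α * ‖y‖ ≤ t * m * ‖y‖ :=
            mul_le_mul_of_nonneg_right (mul_le_mul_of_nonneg_left hαm ht0.le) (norm_nonneg y)
        _ < t * m * R := mul_lt_mul_of_pos_left hyR (mul_pos ht0 hm)
        _ = ρ := by rw [hρdef]; ring
    have hmem2 : ∀ y ∈ ball (0 : Euc N) R, x + (-(t * β)) • y ∈ ball x ρ := by
      intro y hy
      rw [mem_ball, dist_eq_norm, add_sub_cancel_left, norm_smul, Real.norm_eq_abs, abs_neg,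
        abs_of_pos (mul_pos ht0 hβ)]
      have hyR : ‖y‖ < R := by simpa [mem_ball, dist_eq_norm] using hy
      calc t * β * ‖y‖ ≤ t * m * ‖y‖ :=
            mul_le_mul_of_nonneg_right (mul_le_mul_of_nonneg_left hβm ht0.le) (norm_nonneg y)
        _ < t * m * R := mul_lt_mul_of_pos_left hyR (mul_pos ht0 hm)
        _ = ρ := by rw [hρdef]; ring
    have hball_cb : ball x ρ ⊆ closedBall x r0 := fun z hz =>
      mem_closedBall.2 (le_trans (le_of_lt (mem_ball.1 hz)) hρr0)
    have hKm : MeasurableSet K := hK.isClosed.measurableSet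
    have hae1 : ∀ᵐ y ∂volume.restrict K, u (x + (t * α) • y) = w (x + (t * α) • y) := by
      rw [ae_iff, Measure.restrict_apply' hKm]
      refine measure_mono_null ?_ (hpull (t * α) hs1)
      rintro y ⟨hne, hyK⟩
      exact mem_preimage.2 (hZsub ⟨hne, hball_cb (hmem1 y (hKR hyK))⟩)
    have hae2 : ∀ᵐ y ∂volume.restrict K, u (x + (-(t * β)) • y) = w (x + (-(t * β)) • y) := by
      rw [ae_iff, Measure.restrict_apply' hKm]
      refine measure_mono_null ?_ (hpull (-(t * β)) hs2)
      rintro y ⟨hne, hyK⟩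
      exact mem_preimage.2 (hZsub ⟨hne, hball_cb (hmem2 y (hKR hyK))⟩)
    have hgoal_eq : (∫⁻ y in K, ENNReal.ofReal |‖u (x + (t * α) • y) - u (x - (t * β) • y)‖ - ‖h‖|)
        = ∫⁻ y in K, ENNReal.ofReal |‖w (x + (t * α) • y) - w (x + (-(t * β)) • y)‖ - ‖h‖| := by
      refine lintegral_congr_ae ?_
      filter_upwards [hae1, hae2] with y h1 h2
      rw [hsub_eq y, h1, h2]
    rw [hgoal_eq]
    set KP : Set (Euc N) := K ∩ {y : Euc N | 0 < (inner ℝ ν y : ℝ)} with hKPdef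
    set KM : Set (Euc N) := K ∩ {y : Euc N | (inner ℝ ν y : ℝ) < 0} with hKMdef
    set K0 : Set (Euc N) := {y : Euc N | (inner ℝ ν y : ℝ) = 0} with hK0def
    have hK0null : volume K0 = 0 := by
      have h0 := hyperplane_null N 0 ν hν
      simpa [hK0def, sub_zero] using h0
    have hKPm : MeasurableSet KP := hKm.inter (isOpen_innerPos ν).measurableSet
    have hKMm : MeasurableSet KM := hKm.inter (isOpen_innerNeg ν).measurableSet
    set g1 : Euc N → ℝ≥0∞ := fun z => (‖w z - h - c‖₊ : ℝ≥0∞) with hg1def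
    set g2 : Euc N → ℝ≥0∞ := fun z => (‖w z - c‖₊ : ℝ≥0∞) with hg2def
    have hg1m : Measurable g1 := ((hwmeas.sub measurable_const).sub measurable_const).nnnorm.coe_nnreal_ennreal
    have hg2m : Measurable g2 := (hwmeas.sub measurable_const).nnnorm.coe_nnreal_ennreal
    set F : Euc N → ℝ≥0∞ := fun y =>
      ENNReal.ofReal |‖w (x + (t * α) • y) - w (x + (-(t * β)) • y)‖ - ‖h‖| with hFdef
    have hPmem1 : ∀ y, y ∈ KP → x + (t * α) • y ∈ halfBallP x ν ρ := by
      rintro y ⟨hyK, hyi⟩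
      refine ⟨hmem1 y (hKR hyK), ?_⟩
      rw [add_sub_cancel_left, real_inner_smul_right]
      exact mul_pos (mul_pos ht0 hα) hyi
    have hMmem1 : ∀ y, y ∈ KP → x + (-(t * β)) • y ∈ halfBallM x ν ρ := by
      rintro y ⟨hyK, hyi⟩
      refine ⟨hmem2 y (hKR hyK), ?_⟩
      rw [add_sub_cancel_left, real_inner_smul_right]
      exact mul_neg_of_neg_of_pos (neg_neg_iff_pos.2 (mul_pos ht0 hβ)) hyi
    have hPmem2 : ∀ y, y ∈ KM → x + (-(t * β)) • y ∈ halfBallP x ν ρ := by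
      rintro y ⟨hyK, hyi⟩
      refine ⟨hmem2 y (hKR hyK), ?_⟩
      rw [add_sub_cancel_left, real_inner_smul_right]
      exact mul_pos_of_neg_of_neg (neg_neg_iff_pos.2 (mul_pos ht0 hβ)) hyi
    have hMmem2 : ∀ y, y ∈ KM → x + (t * α) • y ∈ halfBallM x ν ρ := by
      rintro y ⟨hyK, hyi⟩
      refine ⟨hmem1 y (hKR hyK), ?_⟩
      rw [add_sub_cancel_left, real_inner_smul_right]
      exact mul_neg_of_pos_of_neg (mul_pos ht0 hα) hyi
    have hptwise : ∀ a b : Euc d, |‖a - b‖ - ‖h‖| ≤ ‖a - h - c‖ + ‖b - c‖ := by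
      intro a b
      have h2 : a - b - h = (a - h - c) - (b - c) := by abel
      calc |‖a - b‖ - ‖h‖| ≤ ‖a - b - h‖ := abs_norm_sub_norm_le (a - b) h
        _ = ‖(a - h - c) - (b - c)‖ := by rw [h2]
        _ ≤ ‖a - h - c‖ + ‖b - c‖ := norm_sub_le _ _
    have hptwise' : ∀ a b : Euc d, ENNReal.ofReal |‖a - b‖ - ‖h‖|
        ≤ (‖a - h - c‖₊ : ℝ≥0∞) + (‖b - c‖₊ : ℝ≥0∞) := by
      intro a b
      rw [← ofReal_norm_eq_coe_nnnorm, ← ofReal_norm_eq_coe_nnnorm,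
        ← ENNReal.ofReal_add (norm_nonneg _) (norm_nonneg _)]
      exact ENNReal.ofReal_le_ofReal (hptwise a b)
    have hchange : ∀ (g : Euc N → ℝ≥0∞), Measurable g → ∀ (s : ℝ), s ≠ 0 →
        ∀ (S : Set (Euc N)), MeasurableSet S →
        (∫⁻ z in S, g z) ≤ ε' * (ENNReal.ofReal (ρ ^ N) * V) →
        ∀ (E : Set (Euc N)), (∀ y ∈ E, x + s • y ∈ S) →
        (∫⁻ y in E, g (x + s • y)) ≤ ε' * V * ENNReal.ofReal ((ρ / |s|) ^ N) := by
      intro g hg s hs S hSm hSle E hE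
      have e1 : ENNReal.ofReal ((ρ / |s|) ^ N)
          = ENNReal.ofReal |(s ^ N)⁻¹| * ENNReal.ofReal (ρ ^ N) := by
        rw [abs_inv, abs_pow, ← ENNReal.ofReal_mul (by positivity), div_pow, div_eq_mul_inv,
          mul_comm]
      calc (∫⁻ y in E, g (x + s • y))
          ≤ ∫⁻ y in (fun y : Euc N => x + s • y) ⁻¹' S, g (x + s • y) :=
            lintegral_mono_set (fun y hy => mem_preimage.2 (hE y hy))
        _ = ENNReal.ofReal |(s ^ N)⁻¹| * ∫⁻ z in S, g z := lintegral_comp_affine x hs hSm hg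
        _ ≤ ENNReal.ofReal |(s ^ N)⁻¹| * (ε' * (ENNReal.ofReal (ρ ^ N) * V)) :=
            mul_le_mul_right hSle _
        _ = ε' * V * ENNReal.ofReal ((ρ / |s|) ^ N) := by rw [e1]; ring
    have habs1 : |t * α| = t * α := abs_of_pos (mul_pos ht0 hα)
    have habs2 : |(-(t * β))| = t * β := by rw [abs_neg]; exact abs_of_pos (mul_pos ht0 hβ)
    have hdiv1 : ρ / (t * α) = m * R / α := by
      rw [hρdef]; field_simp
    have hdiv2 : ρ / (t * β) = m * R / β := by
      rw [hρdef]; field_simp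
    have hT1 : (∫⁻ y in KP, g1 (x + (t * α) • y)) ≤ ε' * V * A1 := by
      have := hchange g1 hg1m (t * α) hs1 (halfBallP x ν ρ)
        (isOpen_halfBallP x ν ρ).measurableSet hcP KP hPmem1
      rwa [habs1, hdiv1] at this
    have hT2 : (∫⁻ y in KP, g2 (x + (-(t * β)) • y)) ≤ ε' * V * A2 := by
      have := hchange g2 hg2m (-(t * β)) hs2 (halfBallM x ν ρ)
        (isOpen_halfBallM x ν ρ).measurableSet hcM KP hMmem1
      rwa [habs2, hdiv2] at this
    have hT3 : (∫⁻ y in KM, g1 (x + (-(t * β)) • y)) ≤ ε' * V * A2 := by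
      have := hchange g1 hg1m (-(t * β)) hs2 (halfBallP x ν ρ)
        (isOpen_halfBallP x ν ρ).measurableSet hcP KM hPmem2
      rwa [habs2, hdiv2] at this
    have hT4 : (∫⁻ y in KM, g2 (x + (t * α) • y)) ≤ ε' * V * A1 := by
      have := hchange g2 hg2m (t * α) hs1 (halfBallM x ν ρ)
        (isOpen_halfBallM x ν ρ).measurableSet hcM KM hMmem2
      rwa [habs1, hdiv1] at this
    have hKsub : K ⊆ KP ∪ (KM ∪ K0) := by
      intro y hyK
      rcases lt_trichotomy (inner ℝ ν y : ℝ) 0 with hlt | heq | hgt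
      · exact Or.inr (Or.inl ⟨hyK, hlt⟩)
      · exact Or.inr (Or.inr heq)
      · exact Or.inl ⟨hyK, hgt⟩
    have hFP : (∫⁻ y in KP, F y) ≤ ε' * V * A1 + ε' * V * A2 := by
      have hmono : (∫⁻ y in KP, F y) ≤
          ∫⁻ y in KP, (g1 (x + (t * α) • y) + g2 (x + (-(t * β)) • y)) := by
        refine setLIntegral_mono' hKPm (fun y _ => ?_)
        exact hptwise' _ _
      have hadd : (∫⁻ y in KP, (g1 (x + (t * α) • y) + g2 (x + (-(t * β)) • y)))
          = (∫⁻ y in KP, g1 (x + (t * α) • y)) + ∫⁻ y in KP, g2 (x + (-(t * β)) • y) :=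
        lintegral_add_left (hg1m.comp (measurable_const.add (measurable_const_smul _))) _
      exact le_trans hmono (by rw [hadd]; exact add_le_add hT1 hT2)
    have hFM : (∫⁻ y in KM, F y) ≤ ε' * V * A2 + ε' * V * A1 := by
      have hmono : (∫⁻ y in KM, F y) ≤
          ∫⁻ y in KM, (g1 (x + (-(t * β)) • y) + g2 (x + (t * α) • y)) := by
        refine setLIntegral_mono' hKMm (fun y _ => ?_)
        have hpt := hptwise' (w (x + (-(t * β)) • y)) (w (x + (t * α) • y))
        rw [norm_sub_rev] at hpt
        exact hpt
      have hadd : (∫⁻ y in KM, (g1 (x + (-(t * β)) • y) + g2 (x + (t * α) • y)))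
          = (∫⁻ y in KM, g1 (x + (-(t * β)) • y)) + ∫⁻ y in KM, g2 (x + (t * α) • y) :=
        lintegral_add_left (hg1m.comp (measurable_const.add (measurable_const_smul _))) _
      exact le_trans hmono (by rw [hadd]; exact add_le_add hT3 hT4)
    have hF0 : (∫⁻ y in K0, F y) = 0 := setLIntegral_measure_zero _ _ hK0null
    calc (∫⁻ y in K, F y)
        ≤ ∫⁻ y in KP ∪ (KM ∪ K0), F y := lintegral_mono_set hKsub
      _ ≤ (∫⁻ y in KP, F y) + ∫⁻ y in KM ∪ K0, F y := lintegral_union_le _ _ _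
      _ ≤ (∫⁻ y in KP, F y) + ((∫⁻ y in KM, F y) + ∫⁻ y in K0, F y) :=
          add_le_add_right (lintegral_union_le _ _ _) _
      _ ≤ (ε' * V * A1 + ε' * V * A2) + ((ε' * V * A2 + ε' * V * A1) + 0) := by
          rw [hF0]
          exact add_le_add hFP (add_le_add hFM le_rfl)
      _ = ε' * (2 * V * (A1 + A2)) := by ring
      _ ≤ ε' * Cm := mul_le_mul_right (self_le_add_right _ _) _
      _ = ε := ENNReal.div_mul_cancel hC0 hCt
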